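/- Let N be a sharp fs monoid, L a sharp fs monoid with N ⊆ L ⊆ N^gp, M a sharp fs monoid, and i : N → M a local morphism. Suppose n ∈ N^gp satisfies i^gp(n) = 0, -n ∈ L, and n ≠ 0. Then the push-out M ⊔_N L (along i and the inclusion N ↪ L) is not quasi-integral. -/

import Mathlib

/-- `η : M →+ G` exhibits the abelian group `G` as the groupification of the
commutative monoid `M`. -/
def IsGroupification {M G : Type*} [AddCommMonoid M] [AddCommGroup G] (η : M →+ G) : Prop :=
  (∀ x : G, ∃ a b : M, x = η a - η b) ∧
  (∀ a b : M, η a = η b ↔ ∃ k : M, a + k = b + k)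

/-- A commutative monoid is sharp if its unit group is trivial. -/
def IsSharp (M : Type*) [AddCommMonoid M] : Prop := ∀ x : M, IsAddUnit x → x = 0

/-- A morphism of monoids is local if the preimage of the unit group is the unit group. -/
def IsLocalMonoidHom {N M : Type*} [AddCommMonoid N] [AddCommMonoid M] (f : N →+ M) : Prop :=
  ∀ n : N, IsAddUnit (f n) → IsAddUnit n

/-- `(P, iM, iL)` is the push-out `M ⊔_N L` of `f : N →+ M` and `g : N →+ L` in the
category of commutative monoids. -/
def IsMonPushout {N M L P : Type*} [AddCommMonoid N] [AddCommMonoid M] [AddCommMonoid L]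
    [AddCommMonoid P] (f : N →+ M) (g : N →+ L) (iM : M →+ P) (iL : L →+ P) : Prop :=
  iM.comp f = iL.comp g ∧
  ∀ (Q : Type*) [AddCommMonoid Q] (jM : M →+ Q) (jL : L →+ Q),
    jM.comp f = jL.comp g → ∃! h : P →+ Q, h.comp iM = jM ∧ h.comp iL = jL

/-- The saturation of a subset `P` of an abelian group `G`:
`P^sat = { x ∈ G | ∃ a ≥ 1, a • x ∈ P }`. -/
def saturationOf {G : Type*} [AddCommGroup G] (P : Set G) : Set G :=
  {x : G | ∃ a : ℕ, 0 < a ∧ a • x ∈ P}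


/-- The hom from a "sharp" monoid to `ℕ∞` sending `0` to `0` and everything else to `⊤`. -/
noncomputable def sharpHom {M : Type*} [AddCommMonoid M]
    (h : ∀ a b : M, a + b = 0 → a = 0) : M →+ ℕ∞ where
  toFun m := open Classical in if m = 0 then 0 else ⊤
  map_zero' := by simp
  map_add' a b := by
    classical
    by_cases ha : a = 0
    · by_cases hb : b = 0 <;> simp [ha, hb]
    · by_cases hb : b = 0
      · simp [ha, hb]
      · have hab : a + b ≠ 0 := fun H => ha (h a b H)
        simp [ha, hb, hab]

theorem sharpHom_ne {M : Type*} [AddCommMonoid M]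
    (h : ∀ a b : M, a + b = 0 → a = 0) {m : M} (hm : m ≠ 0) : sharpHom h m = ⊤ := by
  classical
  show (if m = 0 then (0:ℕ∞) else ⊤) = ⊤
  simp [hm]

/-- Let `N` be a sharp fs monoid, `L` a sharp fs monoid with `N ⊆ L ⊆ N^gp`, `M` a sharp
fs monoid, and `i : N → M` a local morphism.  Suppose `n ∈ N^gp` satisfies `i^gp n = 0`,
`-n ∈ L`, and `n ≠ 0`.  Then the push-out `M ⊔_N L` (along `i` and the inclusion
`N ↪ L`) is not quasi-integral. -/
theorem stmt10 {N M Ngp Mgp : Type*} [AddCommMonoid N] [AddCommMonoid M]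
    [AddCommGroup Ngp] [AddCommGroup Mgp]
    (ηN : N →+ Ngp) (hgpN : IsGroupification ηN) (hNinj : Function.Injective ηN)
    (hNsharp : IsSharp N) (hNfg : AddMonoid.FG N)
    (hNsat : ∀ x : Ngp, (∃ a : ℕ, 0 < a ∧ a • x ∈ AddMonoidHom.mrange ηN) →
      x ∈ AddMonoidHom.mrange ηN)
    (L : AddSubmonoid Ngp) (hsub : ∀ n : N, ηN n ∈ L)
    (hLsharp : ∀ x : Ngp, x ∈ L → -x ∈ L → x = 0)
    (hLfg : L.FG)
    (hLsat : ∀ x : Ngp, (∃ a : ℕ, 0 < a ∧ a • x ∈ L) → x ∈ L)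
    (ηM : M →+ Mgp) (hgpM : IsGroupification ηM) (hMinj : Function.Injective ηM)
    (hMsharp : IsSharp M) (hMfg : AddMonoid.FG M)
    (hMsat : ∀ x : Mgp, (∃ a : ℕ, 0 < a ∧ a • x ∈ AddMonoidHom.mrange ηM) →
      x ∈ AddMonoidHom.mrange ηM)
    (i : N →+ M) (hiloc : IsLocalMonoidHom i)
    (I : Ngp →+ Mgp) (hI : I.comp ηN = ηM.comp i)
    (n : Ngp) (hn0 : I n = 0) (hnL : -n ∈ L) (hne : n ≠ 0)
    (P : Type*) [AddCommMonoid P] (iM : M →+ P) (iL : L →+ P)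
    (hpo : IsMonPushout i (ηN.codRestrict L hsub) iM iL)
    (Pgp : Type*) [AddCommGroup Pgp] (ηP : P →+ Pgp) (hgpP : IsGroupification ηP) :
    ∃ p : P, ηP p = 0 ∧ p ≠ 0 := by
  classical
  set g : N →+ L := ηN.codRestrict L hsub with hg
  have hM0 : ∀ a b : M, a + b = 0 → a = 0 := fun a b hab =>
    hMsharp a (IsAddUnit.of_add_eq_zero b hab)
  have hL0 : ∀ a b : L, a + b = 0 → a = 0 := by
    intro a b hab
    have h1 : (a : Ngp) + (b : Ngp) = 0 := congrArg Subtype.val hab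
    have h2 : -(a : Ngp) = (b : Ngp) := neg_eq_of_add_eq_zero_right h1
    exact Subtype.ext (hLsharp a a.2 (h2 ▸ b.2))
  have hi0 : ∀ a : N, i a = 0 ↔ a = 0 := by
    intro a
    constructor
    · intro h
      exact hNsharp a (hiloc a (h ▸ isAddUnit_zero))
    · rintro rfl; simp
  have hg0 : ∀ a : N, g a = 0 ↔ a = 0 := by
    intro a
    constructor
    · intro h
      have : ηN a = (0 : Ngp) := congrArg Subtype.val h
      exact hNinj (by simpa using this)
    · rintro rfl; simp
  -- the element
  refine ⟨iL ⟨-n, hnL⟩, ?_, ?_⟩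
  · -- ηP (iL ⟨-n⟩) = 0
    obtain ⟨a, b, hab⟩ := hgpN.1 n
    have hLrel : (⟨-n, hnL⟩ : L) + g a = g b := by
      apply Subtype.ext
      show -n + ηN a = ηN b
      rw [hab]; abel
    have hcomm : ∀ c : N, iM (i c) = iL (g c) := fun c =>
      congrFun (congrArg DFunLike.coe hpo.1) c
    have hIab : ηM (i a) = ηM (i b) := by
      have ha' : I (ηN a) = ηM (i a) := congrFun (congrArg DFunLike.coe hI) a
      have hb' : I (ηN b) = ηM (i b) := congrFun (congrArg DFunLike.coe hI) b
      have : I (ηN a) - I (ηN b) = 0 := by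
        rw [← map_sub, ← hab, hn0]
      rw [ha', hb'] at this
      exact sub_eq_zero.mp this
    obtain ⟨k, hk⟩ := (hgpM.2 (i a) (i b)).1 hIab
    have hPab : ηP (iM (i a)) = ηP (iM (i b)) := by
      have := congrArg (fun m => ηP (iM m)) hk
      simp only [map_add] at this
      exact add_right_cancel this
    have h1 : ηP (iL ⟨-n, hnL⟩) + ηP (iL (g a)) = ηP (iL (g b)) := by
      rw [← map_add, ← map_add, hLrel]
    rw [← hcomm a, ← hcomm b, hPab] at h1
    exact add_right_cancel (by rw [zero_add]; exact h1)
  · -- iL ⟨-n⟩ ≠ 0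
    intro hzero
    have jM : M →+ ℕ∞ := sharpHom hM0
    set e : ULift.{_} ℕ∞ ≃+ ℕ∞ := AddEquiv.ulift
    set jM' : M →+ ULift ℕ∞ := e.symm.toAddMonoidHom.comp (sharpHom hM0) with hjM'
    set jL' : L →+ ULift ℕ∞ := e.symm.toAddMonoidHom.comp (sharpHom hL0) with hjL'
    have hcomm : (sharpHom hM0).comp i = (sharpHom hL0).comp g := by
      ext a
      by_cases h : a = 0
      · simp [h]
      · have h1 : i a ≠ 0 := fun H => h ((hi0 a).1 H)
        have h2 : g a ≠ 0 := fun H => h ((hg0 a).1 H)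
        simp only [AddMonoidHom.comp_apply, sharpHom_ne hM0 h1, sharpHom_ne hL0 h2]
    have hcomm' : jM'.comp i = jL'.comp g := by
      rw [hjM', hjL', AddMonoidHom.comp_assoc, AddMonoidHom.comp_assoc, hcomm]
    obtain ⟨h, ⟨hhM, hhL⟩, -⟩ := hpo.2 (ULift ℕ∞) jM' jL' hcomm'
    have hval : h (iL ⟨-n, hnL⟩) = jL' ⟨-n, hnL⟩ :=
      congrFun (congrArg DFunLike.coe hhL) _
    have hne' : (⟨-n, hnL⟩ : L) ≠ 0 := by
      intro hc
      exact hne (by simpa using congrArg Subtype.val hc)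
    have htop : jL' ⟨-n, hnL⟩ = e.symm ⊤ := by
      rw [hjL']
      simp [sharpHom_ne hL0 hne']
    rw [hzero, map_zero, htop] at hval
    have : (0 : ℕ∞) = ⊤ := by
      have := congrArg e hval
      simpa using this
    simp at this
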